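/- (Pointwise convergence step in the proof of Lemma 4.1.) Let p > 1, α, β > 0, h₀ ≥ 0, and let a : ℝ × ℝ^d → ℝ^d be continuous and satisfy, for all s ∈ ℝ and all ξ ≠ η ∈ ℝ^d: a(s,ξ)·ξ ≥ α|ξ|^p, |a(s,ξ)| ≤ β(h₀ + |s|^{p−1} + |ξ|^{p−1}), and (a(s,ξ) − a(s,η))·(ξ − η) > 0. Let (s_n) ⊂ ℝ and (ξ_n) ⊂ ℝ^d be sequences with s_n → s and [a(s_n,ξ_n) − a(s,ξ)]·(ξ_n − ξ) → 0. Then ξ_n → ξ. -/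
import Mathlib

open Filter
open scoped RealInnerProductSpace

lemma aux_bound {p α A B C t : ℝ} (hp : 1 < p) (hα : 0 < α) (hA : 0 ≤ A)
    (hB : 0 ≤ B) (hC : 0 ≤ C) (ht : 0 ≤ t)
    (h : α * t ^ p ≤ A + B * t ^ (p - 1) + C * t) :
    t ≤ max 1 (((A + B + C) / α) ^ (1 / (p - max 1 (p - 1)))) := by
  rcases le_or_gt t 1 with h1 | h1
  · exact le_max_of_le_left h1
  set q := max 1 (p - 1) with hq
  have hq_lt : q < p := max_lt hp (by linarith)
  have hqpos : (0:ℝ) < q := lt_of_lt_of_le one_pos (le_max_left _ _)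
  have ht0 : 0 < t := by linarith
  have h2 : t ^ (p - 1) ≤ t ^ q := Real.rpow_le_rpow_of_exponent_le h1.le (le_max_right _ _)
  have h3 : t ≤ t ^ q := by
    calc t = t ^ (1:ℝ) := (Real.rpow_one t).symm
    _ ≤ t ^ q := Real.rpow_le_rpow_of_exponent_le h1.le (le_max_left _ _)
  have h4 : (1:ℝ) ≤ t ^ q := by
    calc (1:ℝ) = 1 ^ q := (Real.one_rpow q).symm
    _ ≤ t ^ q := Real.rpow_le_rpow zero_le_one h1.le hqpos.le
  have h5 : α * t ^ p ≤ (A + B + C) * t ^ q := by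
    nlinarith [mul_le_mul_of_nonneg_left h2 hB, mul_le_mul_of_nonneg_left h3 hC,
      mul_le_mul_of_nonneg_left h4 hA]
  have htq : 0 < t ^ q := Real.rpow_pos_of_pos ht0 q
  have h6 : t ^ (p - q) ≤ (A + B + C) / α := by
    rw [Real.rpow_sub ht0, div_le_div_iff₀ htq hα]
    linarith
  have h7 : t = (t ^ (p - q)) ^ (1 / (p - q)) := by
    rw [← Real.rpow_mul ht0.le, mul_one_div, div_self (by linarith : p - q ≠ 0), Real.rpow_one]
  have h8 : t ≤ ((A + B + C) / α) ^ (1 / (p - q)) := by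
    rw [h7]
    exact Real.rpow_le_rpow (Real.rpow_nonneg ht0.le _) h6
      (le_of_lt (div_pos one_pos (by linarith)))
  exact le_max_of_le_right h8

/-- Pointwise convergence step in the proof of Lemma 4.1. -/
theorem stmt_7 {d : ℕ} (p α β h₀ : ℝ) (hp : 1 < p) (hα : 0 < α) (hβ : 0 < β)
    (hh₀ : 0 ≤ h₀)
    (a : ℝ → EuclideanSpace ℝ (Fin d) → EuclideanSpace ℝ (Fin d))
    (hacont : Continuous (fun sξ : ℝ × EuclideanSpace ℝ (Fin d) => a sξ.1 sξ.2))
    (hell : ∀ (s : ℝ) (ξ : EuclideanSpace ℝ (Fin d)), α * ‖ξ‖ ^ p ≤ ⟪a s ξ, ξ⟫)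
    (hgrowth : ∀ (s : ℝ) (ξ : EuclideanSpace ℝ (Fin d)),
      ‖a s ξ‖ ≤ β * (h₀ + |s| ^ (p - 1) + ‖ξ‖ ^ (p - 1)))
    (hmon : ∀ (s : ℝ) (ξ η : EuclideanSpace ℝ (Fin d)), ξ ≠ η →
      0 < ⟪a s ξ - a s η, ξ - η⟫)
    (sn : ℕ → ℝ) (s : ℝ) (hs : Tendsto sn atTop (nhds s))
    (ξn : ℕ → EuclideanSpace ℝ (Fin d)) (ξ : EuclideanSpace ℝ (Fin d))
    (hconv : Tendsto (fun n => ⟪a (sn n) (ξn n) - a s ξ, ξn n - ξ⟫)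
      atTop (nhds 0)) :
    Tendsto ξn atTop (nhds ξ) := by
  by_contra hnot
  -- bounds
  set S : ℝ := |s| + 1 with hS
  have hSnn : (0:ℝ) ≤ S := by positivity
  have hsb : ∀ᶠ n in atTop, |sn n| ≤ S := by
    have habs : Tendsto (fun n => |sn n|) atTop (nhds |s|) := hs.abs
    exact habs.eventually (eventually_le_nhds (lt_add_one |s|))
  have heb : ∀ᶠ n in atTop, ⟪a (sn n) (ξn n) - a s ξ, ξn n - ξ⟫ ≤ 1 :=
    hconv.eventually (eventually_le_nhds one_pos)
  set C₀ : ℝ := ‖a s ξ‖ with hC₀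
  set A : ℝ := 1 + β * (h₀ + S ^ (p - 1)) * ‖ξ‖ + C₀ * ‖ξ‖ with hA
  set B : ℝ := β * ‖ξ‖ with hB
  have hAnn : 0 ≤ A := by positivity
  have hBnn : 0 ≤ B := by positivity
  have hCnn : 0 ≤ C₀ := norm_nonneg _
  set M : ℝ := max 1 (((A + B + C₀) / α) ^ (1 / (p - max 1 (p - 1)))) with hM
  have hMb : ∀ᶠ n in atTop, ‖ξn n‖ ≤ M := by
    filter_upwards [heb, hsb] with n he hsn
    apply aux_bound hp hα hAnn hBnn hCnn (norm_nonneg _)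
    have key : α * ‖ξn n‖ ^ p ≤ ⟪a (sn n) (ξn n), ξn n⟫ := hell _ _
    have hexp : ⟪a (sn n) (ξn n), ξn n⟫ =
        ⟪a (sn n) (ξn n) - a s ξ, ξn n - ξ⟫ + ⟪a (sn n) (ξn n), ξ⟫
          + ⟪a s ξ, ξn n - ξ⟫ := by
      simp only [inner_sub_left, inner_sub_right]; ring
    have hb1 : ⟪a (sn n) (ξn n), ξ⟫ ≤ β * (h₀ + S ^ (p - 1) + ‖ξn n‖ ^ (p - 1)) * ‖ξ‖ := by
      calc ⟪a (sn n) (ξn n), ξ⟫ ≤ ‖a (sn n) (ξn n)‖ * ‖ξ‖ := real_inner_le_norm _ _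
      _ ≤ β * (h₀ + |sn n| ^ (p - 1) + ‖ξn n‖ ^ (p - 1)) * ‖ξ‖ :=
          mul_le_mul_of_nonneg_right (hgrowth _ _) (norm_nonneg _)
      _ ≤ β * (h₀ + S ^ (p - 1) + ‖ξn n‖ ^ (p - 1)) * ‖ξ‖ := by
          have : |sn n| ^ (p - 1) ≤ S ^ (p - 1) :=
            Real.rpow_le_rpow (abs_nonneg _) hsn (by linarith)
          have hb : 0 ≤ ‖ξ‖ := norm_nonneg _
          nlinarith
    have hb2 : ⟪a s ξ, ξn n - ξ⟫ ≤ C₀ * (‖ξn n‖ + ‖ξ‖) := by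
      calc ⟪a s ξ, ξn n - ξ⟫ ≤ ‖a s ξ‖ * ‖ξn n - ξ‖ := real_inner_le_norm _ _
      _ ≤ C₀ * (‖ξn n‖ + ‖ξ‖) :=
          mul_le_mul_of_nonneg_left (norm_sub_le _ _) hCnn
    rw [hexp] at key
    have hSp : 0 ≤ S ^ (p - 1) := Real.rpow_nonneg hSnn _
    have hb : 0 ≤ ‖ξ‖ := norm_nonneg _
    rw [hA, hB]
    nlinarith
  -- extract subsequence staying away from ξ
  rw [Metric.tendsto_atTop] at hnot
  push_neg at hnot
  obtain ⟨ε, hε, hfreq0⟩ := hnot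
  have hfreq : ∃ᶠ n in atTop, ε ≤ dist (ξn n) ξ := by
    rw [frequently_atTop]
    intro N
    obtain ⟨n, hn, hd⟩ := hfreq0 N
    exact ⟨n, hn, hd⟩
  obtain ⟨φ, hφmono, hφ⟩ :=
    Filter.extraction_of_frequently_atTop (hfreq.and_eventually hMb)
  -- extract convergent sub-subsequence by compactness
  obtain ⟨η, -, ψ, hψmono, hψ⟩ :=
    tendsto_subseq_of_bounded (Metric.isBounded_closedBall (x := (0 : EuclideanSpace ℝ (Fin d))) (r := M))
      (fun k => by
        rw [Metric.mem_closedBall, dist_zero_right]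
        exact (hφ k).2)
  set θ : ℕ → ℕ := φ ∘ ψ with hθ
  have hθmono : StrictMono θ := hφmono.comp hψmono
  have hθtop : Tendsto θ atTop atTop := hθmono.tendsto_atTop
  have hξθ : Tendsto (fun k => ξn (θ k)) atTop (nhds η) := hψ
  have hsθ : Tendsto (fun k => sn (θ k)) atTop (nhds s) := hs.comp hθtop
  have hpair : Tendsto (fun k => (sn (θ k), ξn (θ k))) atTop (nhds (s, η)) :=
    hsθ.prodMk_nhds hξθ
  have haθ : Tendsto (fun k => a (sn (θ k)) (ξn (θ k))) atTop (nhds (a s η)) :=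
    (hacont.tendsto (s, η)).comp hpair
  have hinner : Tendsto (fun k => ⟪a (sn (θ k)) (ξn (θ k)) - a s ξ, ξn (θ k) - ξ⟫)
      atTop (nhds ⟪a s η - a s ξ, η - ξ⟫) :=
    (haθ.sub tendsto_const_nhds).inner (hξθ.sub tendsto_const_nhds)
  have hzero : Tendsto (fun k => ⟪a (sn (θ k)) (ξn (θ k)) - a s ξ, ξn (θ k) - ξ⟫)
      atTop (nhds 0) := hconv.comp hθtop
  have huniq : ⟪a s η - a s ξ, η - ξ⟫ = 0 := tendsto_nhds_unique hinner hzero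
  have hdη : ε ≤ dist η ξ := by
    have hd : Tendsto (fun k => dist (ξn (θ k)) ξ) atTop (nhds (dist η ξ)) :=
      hξθ.dist tendsto_const_nhds
    exact ge_of_tendsto hd (Eventually.of_forall fun k => (hφ (ψ k)).1)
  have hne : η ≠ ξ := by
    intro hη
    rw [hη, dist_self] at hdη
    linarith
  exact absurd huniq (ne_of_gt (hmon s η ξ hne))
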